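/- Let E be a real inner product space, let N ≥ 1 be an integer, let v = (v₁,…,v_N) : E → ℝ^N have all components differentiable at a point x ∈ E, and set ρ := Σ_{i=1}^N v_i². Then ρ is differentiable at x with gradient ∇ρ(x) = 2 Σ_i v_i(x) ∇v_i(x), and | ‖∇ρ(x)‖² − 4 ρ(x) | ≤ 4 ρ(x) · Σ_{i,j=1}^N |⟨∇v_i(x), ∇v_j(x)⟩ − δ_{ij}|. Consequently, if ρ(x) > 0 and r := √ρ, then | ‖∇r(x)‖² − 1 | ≤ Σ_{i,j=1}^N |⟨∇v_i(x), ∇v_j(x)⟩ − δ_{ij}|. -/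

import Mathlib

open scoped RealInnerProductSpace

/-- Let `E` be a real inner product space, `N ≥ 1` an integer,
`v = (v₁,…,v_N) : E → ℝ^N` with each component differentiable at `x ∈ E` with gradient
`g i` (i.e. derivative `y ↦ ⟪g i, y⟫`), and set `ρ := Σ_i v_i²`. Then `ρ` is differentiable at
`x` with gradient `∇ρ(x) = 2 Σ_i v_i(x) ∇v_i(x)`, and
`| ‖∇ρ(x)‖² − 4 ρ(x) | ≤ 4 ρ(x) Σ_{i,j} |⟪∇v_i(x), ∇v_j(x)⟫ − δ_{ij}|`.
Consequently, if `ρ(x) > 0` and `r := √ρ`, then `r` is differentiable at `x` with gradient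
`∇r(x) = ∇ρ(x)/(2√(ρ(x)))` and `| ‖∇r(x)‖² − 1 | ≤ Σ_{i,j} |⟪∇v_i(x), ∇v_j(x)⟫ − δ_{ij}|`. -/
theorem stmt9 {E : Type*} [NormedAddCommGroup E] [InnerProductSpace ℝ E]
    (N : ℕ) (hN : 1 ≤ N) (v : Fin N → E → ℝ) (g : Fin N → E) (x : E)
    (hv : ∀ i, HasFDerivAt (v i) ((innerSL ℝ) (g i)) x) :
    HasFDerivAt (fun y => ∑ i, v i y ^ 2)
        ((innerSL ℝ) (∑ i, (2 * v i x) • g i)) x ∧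
    |‖∑ i, (2 * v i x) • g i‖ ^ 2 - 4 * ∑ i, v i x ^ 2| ≤
      4 * (∑ i, v i x ^ 2) *
        ∑ i, ∑ j, |⟪g i, g j⟫ - if i = j then (1 : ℝ) else 0| ∧
    (0 < ∑ i, v i x ^ 2 →
      HasFDerivAt (fun y => Real.sqrt (∑ i, v i y ^ 2))
          ((innerSL ℝ)
            ((2 * Real.sqrt (∑ i, v i x ^ 2))⁻¹ • ∑ i, (2 * v i x) • g i)) x ∧
      |‖(2 * Real.sqrt (∑ i, v i x ^ 2))⁻¹ • ∑ i, (2 * v i x) • g i‖ ^ 2 - 1| ≤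
        ∑ i, ∑ j, |⟪g i, g j⟫ - if i = j then (1 : ℝ) else 0|) := by
  set ρ : ℝ := ∑ i, v i x ^ 2 with hρ
  set s : E := ∑ i, (2 * v i x) • g i with hs
  have hρ0 : 0 ≤ ρ := Finset.sum_nonneg fun i _ => sq_nonneg _
  -- part 1
  have h1 : HasFDerivAt (fun y => ∑ i, v i y ^ 2) ((innerSL ℝ) s) x := by
    have each : ∀ i, HasFDerivAt (fun y => v i y ^ 2)
        ((innerSL ℝ) ((2 * v i x) • g i)) x := by
      intro i
      have h := (hv i).fun_mul (hv i)
      have heq : (innerSL ℝ) ((2 * v i x) • g i)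
          = v i x • (innerSL ℝ) (g i) + v i x • (innerSL ℝ) (g i) := by
        ext y
        simp [real_inner_smul_left]
        ring
      rw [heq]
      simpa [pow_two] using h
    have h := HasFDerivAt.fun_sum fun i (_ : i ∈ Finset.univ) => each i
    rw [hs, map_sum]
    exact h
  -- norm identity
  have hnorm : ‖s‖ ^ 2 = ∑ i, ∑ j, (2 * v i x) * (2 * v j x) * ⟪g i, g j⟫ := by
    rw [← real_inner_self_eq_norm_sq, hs, sum_inner]
    refine Finset.sum_congr rfl fun i _ => ?_
    rw [inner_sum]
    refine Finset.sum_congr rfl fun j _ => ?_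
    rw [real_inner_smul_left, real_inner_smul_right]
    ring
  have hdiag : ∑ i, ∑ j, (2 * v i x) * (2 * v j x) * (if i = j then (1:ℝ) else 0) = 4 * ρ := by
    simp [Finset.mul_sum, Finset.sum_ite_eq', mul_comm]
    rw [Finset.mul_sum]
    refine Finset.sum_congr rfl fun i _ => ?_
    ring
  have key : ‖s‖ ^ 2 - 4 * ρ =
      ∑ i, ∑ j, (2 * v i x) * (2 * v j x) * (⟪g i, g j⟫ - if i = j then (1:ℝ) else 0) := by
    rw [hnorm, ← hdiag, ← Finset.sum_sub_distrib]
    refine Finset.sum_congr rfl fun i _ => ?_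
    rw [← Finset.sum_sub_distrib]
    refine Finset.sum_congr rfl fun j _ => ?_
    ring
  have hvbound : ∀ i, v i x ^ 2 ≤ ρ := fun i =>
    Finset.single_le_sum (f := fun i => v i x ^ 2) (fun j _ => sq_nonneg _) (Finset.mem_univ i)
  have h2 : |‖s‖ ^ 2 - 4 * ρ| ≤
      4 * ρ * ∑ i, ∑ j, |⟪g i, g j⟫ - if i = j then (1 : ℝ) else 0| := by
    rw [key]
    calc |∑ i, ∑ j, (2 * v i x) * (2 * v j x) * (⟪g i, g j⟫ - if i = j then (1:ℝ) else 0)|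
        ≤ ∑ i, ∑ j, |(2 * v i x) * (2 * v j x) * (⟪g i, g j⟫ - if i = j then (1:ℝ) else 0)| := by
          refine (Finset.abs_sum_le_sum_abs _ _).trans ?_
          exact Finset.sum_le_sum fun i _ => Finset.abs_sum_le_sum_abs _ _
      _ ≤ ∑ i, ∑ j, 4 * ρ * |⟪g i, g j⟫ - if i = j then (1:ℝ) else 0| := by
          refine Finset.sum_le_sum fun i _ => Finset.sum_le_sum fun j _ => ?_
          rw [abs_mul]
          refine mul_le_mul_of_nonneg_right ?_ (abs_nonneg _)
          have hi := hvbound i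
          have hj := hvbound j
          have : |(2 * v i x) * (2 * v j x)| = 4 * (|v i x| * |v j x|) := by
            rw [abs_mul, abs_mul, abs_mul]
            simp [abs_of_nonneg]
            ring
          rw [this]
          have : |v i x| * |v j x| ≤ ρ := by
            nlinarith [sq_abs (v i x), sq_abs (v j x), sq_nonneg (|v i x| - |v j x|),
              abs_nonneg (v i x), abs_nonneg (v j x)]
          linarith
      _ = 4 * ρ * ∑ i, ∑ j, |⟪g i, g j⟫ - if i = j then (1:ℝ) else 0| := by
          simp [Finset.mul_sum]
  refine ⟨h1, h2, fun hpos => ?_⟩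
  have hsq : Real.sqrt ρ > 0 := Real.sqrt_pos.mpr hpos
  have hsqρ : Real.sqrt ρ ^ 2 = ρ := Real.sq_sqrt hρ0
  -- derivative of sqrt ∘ ρ
  have h3 : HasFDerivAt (fun y => Real.sqrt (∑ i, v i y ^ 2))
      ((innerSL ℝ) ((2 * Real.sqrt ρ)⁻¹ • s)) x := by
    have hd : HasDerivAt Real.sqrt (1 / (2 * Real.sqrt ρ)) ρ :=
      Real.hasDerivAt_sqrt (ne_of_gt hpos)
    have := hd.comp_hasFDerivAt x h1
    have heq : (1 / (2 * Real.sqrt ρ)) • (innerSL ℝ) s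
        = (innerSL ℝ) ((2 * Real.sqrt ρ)⁻¹ • s) := by
      rw [map_smul]
      simp [one_div]
    rw [heq] at this
    exact this
  refine ⟨h3, ?_⟩
  have hnrm : ‖(2 * Real.sqrt ρ)⁻¹ • s‖ ^ 2 = (4 * ρ)⁻¹ * ‖s‖ ^ 2 := by
    rw [norm_smul, mul_pow, Real.norm_eq_abs,
      abs_of_nonneg (by positivity : (0:ℝ) ≤ (2 * Real.sqrt ρ)⁻¹), inv_pow, mul_pow, hsqρ]
    norm_num
  rw [hnrm]
  have h4ρ : (0:ℝ) < 4 * ρ := by linarith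
  have hrw : (4 * ρ)⁻¹ * ‖s‖ ^ 2 - 1 = (4 * ρ)⁻¹ * (‖s‖ ^ 2 - 4 * ρ) := by
    field_simp
  rw [hrw, abs_mul, abs_of_pos (show (0:ℝ) < (4 * ρ)⁻¹ by positivity)]
  calc (4 * ρ)⁻¹ * |‖s‖ ^ 2 - 4 * ρ|
      ≤ (4 * ρ)⁻¹ * (4 * ρ * ∑ i, ∑ j, |⟪g i, g j⟫ - if i = j then (1:ℝ) else 0|) :=
        mul_le_mul_of_nonneg_left h2 (by positivity)
    _ = ∑ i, ∑ j, |⟪g i, g j⟫ - if i = j then (1:ℝ) else 0| := by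
        field_simp
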